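/- Let X be a set, 𝒲 a set of walls in ℝ^r, and U a wall and chamber family of subsets of X with set of walls 𝒲. Suppose α, β ∈ ℝ^r are separated by exactly one wall of 𝒲, say L^{−1}(γ), with L(α) ≤ γ < L(β). Then U^β ⊆ U^α. -/

import Mathlib

open Set

/-- The pairing `L(α) = ∑ i, L i * α i` of a rational covector with a real point. -/
def linPair {r : ℕ} (L : Fin r → ℚ) (α : Fin r → ℝ) : ℝ := ∑ i, (L i : ℝ) * α i

/-- A wall in `ℝ^r`: an affine hyperplane of the form `L⁻¹(β)` for a nonzero
`L ∈ ℚ_{≥0}^r` and `β ∈ ℝ`. -/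
def IsWall {r : ℕ} (Hy : Set (Fin r → ℝ)) : Prop :=
  ∃ (L : Fin r → ℚ) (β : ℝ), (∀ i, 0 ≤ L i) ∧ L ≠ 0 ∧ Hy = {α | linPair L α = β}

/-- A set of walls in `ℝ^r`: a set of walls which is finite modulo translation by `ℤ^r`. -/
def IsWallSet {r : ℕ} (W : Set (Set (Fin r → ℝ))) : Prop :=
  (∀ Hy ∈ W, IsWall Hy) ∧
  ∃ W₀ ⊆ W, W₀.Finite ∧ ∀ Hy ∈ W, ∃ (m : Fin r → ℤ), ∃ H₀ ∈ W₀,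
    Hy = (fun α => α + fun i => (m i : ℝ)) '' H₀

/-- A chamber of a set of walls `W`: a nonempty set obtained by choosing, for each wall,
either the strict upper side or the weak lower side, for some partition `W = Wp ⊔ Wm`. -/
def IsChamber {r : ℕ} (W : Set (Set (Fin r → ℝ))) (σ : Set (Fin r → ℝ)) : Prop :=
  σ.Nonempty ∧
  ∃ Wp Wm : Set (Set (Fin r → ℝ)), Wp ∪ Wm = W ∧ Wp ∩ Wm = ∅ ∧
    σ = {α | (∀ Hy ∈ Wp, ∀ (L : Fin r → ℚ) (β : ℝ),
                (∀ i, 0 ≤ L i) → L ≠ 0 → Hy = {x | linPair L x = β} → β < linPair L α) ∧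
             (∀ Hy ∈ Wm, ∀ (L : Fin r → ℚ) (β : ℝ),
                (∀ i, 0 ≤ L i) → L ≠ 0 → Hy = {x | linPair L x = β} → linPair L α ≤ β)}

/-- A wall `L⁻¹(γ)` separates `α` and `β` if `L(α) ≤ γ < L(β)` or `L(β) ≤ γ < L(α)`. -/
def WallSeparates {r : ℕ} (Hy : Set (Fin r → ℝ)) (α β : Fin r → ℝ) : Prop :=
  ∃ (L : Fin r → ℚ) (γ : ℝ), (∀ i, 0 ≤ L i) ∧ L ≠ 0 ∧ Hy = {x | linPair L x = γ} ∧
    ((linPair L α ≤ γ ∧ γ < linPair L β) ∨ (linPair L β ≤ γ ∧ γ < linPair L α))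

/-! ### Auxiliary lemmas -/

lemma linPair_single {r : ℕ} (L : Fin r → ℚ) (j : Fin r) (a : ℝ) :
    linPair L (Pi.single j a) = (L j : ℝ) * a := by
  simp [linPair, Pi.single_apply, mul_ite, Finset.sum_ite_eq']

lemma linPair_add {r : ℕ} (L : Fin r → ℚ) (x y : Fin r → ℝ) :
    linPair L (x + y) = linPair L x + linPair L y := by
  simp [linPair, mul_add, Finset.sum_add_distrib]

lemma linPair_seg {r : ℕ} (L : Fin r → ℚ) (α β : Fin r → ℝ) (t : ℝ) :
    linPair L (fun i => α i + t * (β i - α i))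
      = linPair L α + t * (linPair L β - linPair L α) := by
  simp only [linPair, mul_add, mul_sub, Finset.sum_add_distrib, Finset.mul_sum,
    Finset.sum_sub_distrib, mul_left_comm]

lemma linPair_sub_const {r : ℕ} (L : Fin r → ℚ) (v : Fin r → ℝ) (ε : ℝ) :
    linPair L (fun i => v i - ε) = linPair L v - ε * ∑ i, (L i : ℝ) := by
  simp only [linPair, mul_sub, Finset.sum_sub_distrib, Finset.mul_sum]
  congr 1
  exact Finset.sum_congr rfl fun i _ => by ring

lemma sum_pos_of_ne {r : ℕ} {L : Fin r → ℚ} (hL : ∀ i, 0 ≤ L i) (hL0 : L ≠ 0) :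
    0 < ∑ i, (L i : ℝ) := by
  obtain ⟨j, hj⟩ := Function.ne_iff.1 hL0
  refine Finset.sum_pos' (fun i _ => by exact_mod_cast hL i) ⟨j, Finset.mem_univ j, ?_⟩
  have := lt_of_le_of_ne (hL j) (Ne.symm hj)
  exact_mod_cast this

lemma linPair_of_prop {r : ℕ} {L L' : Fin r → ℚ} {c : ℚ} (h : ∀ i, L' i = c * L i)
    (x : Fin r → ℝ) : linPair L' x = (c : ℝ) * linPair L x := by
  simp only [linPair, Finset.mul_sum]
  refine Finset.sum_congr rfl fun i _ => ?_
  rw [h i]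
  push_cast
  ring

lemma sum_of_prop {r : ℕ} {L L' : Fin r → ℚ} {c : ℚ} (h : ∀ i, L' i = c * L i) :
    ∑ i, (L' i : ℝ) = (c : ℝ) * ∑ i, (L i : ℝ) := by
  rw [Finset.mul_sum]
  refine Finset.sum_congr rfl fun i _ => ?_
  rw [h i]; push_cast; ring

lemma convex_min_le {a b t : ℝ} (h0 : 0 ≤ t) (h1 : t ≤ 1) : min a b ≤ a + t * (b - a) := by
  rcases le_total a b with h | h
  · have h2 : 0 ≤ t * (b - a) := mul_nonneg h0 (by linarith)
    calc min a b ≤ a := min_le_left a b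
    _ ≤ _ := by linarith
  · have h2 : 1 * (b - a) ≤ t * (b - a) := mul_le_mul_of_nonpos_right h1 (by linarith)
    calc min a b ≤ b := min_le_right a b
    _ ≤ _ := by linarith

lemma convex_le_max {a b t : ℝ} (h0 : 0 ≤ t) (h1 : t ≤ 1) : a + t * (b - a) ≤ max a b := by
  rcases le_total a b with h | h
  · have h2 : t * (b - a) ≤ 1 * (b - a) := mul_le_mul_of_nonneg_right h1 (by linarith)
    calc a + t * (b - a) ≤ b := by linarith
    _ ≤ max a b := le_max_right a b
  · have h2 : t * (b - a) ≤ 0 := mul_nonpos_of_nonneg_of_nonpos h0 (by linarith)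
    calc a + t * (b - a) ≤ a := by linarith
    _ ≤ max a b := le_max_left a b

lemma convex_gt {a b c t : ℝ} (ha : c < a) (hb : c < b) (h0 : 0 ≤ t) (h1 : t ≤ 1) :
    c < a + t * (b - a) :=
  lt_of_lt_of_le (lt_min ha hb) (convex_min_le h0 h1)

lemma convex_le {a b c t : ℝ} (ha : a ≤ c) (hb : b ≤ c) (h0 : 0 ≤ t) (h1 : t ≤ 1) :
    a + t * (b - a) ≤ c :=
  le_trans (convex_le_max h0 h1) (max_le ha hb)

lemma repr_prop {r : ℕ} {L L' : Fin r → ℚ} {γ γ' : ℝ}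
    (hL : ∀ i, 0 ≤ L i) (hL0 : L ≠ 0) (hL' : ∀ i, 0 ≤ L' i) (hL0' : L' ≠ 0)
    (h : {x : Fin r → ℝ | linPair L x = γ} = {x | linPair L' x = γ'}) :
    ∃ c : ℚ, 0 < c ∧ (∀ i, L' i = c * L i) ∧ γ' = (c : ℝ) * γ := by
  obtain ⟨j, hj⟩ := Function.ne_iff.1 hL0
  have hLj : 0 < L j := lt_of_le_of_ne (hL j) (Ne.symm hj)
  have hLjR : (0:ℝ) < (L j : ℝ) := by exact_mod_cast hLj
  have hmem : ∀ x : Fin r → ℝ, linPair L x = γ ↔ linPair L' x = γ' :=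
    fun x => Set.ext_iff.1 h x
  set p : Fin r → ℝ := Pi.single j (γ / (L j : ℝ)) with hp
  have hpL : linPair L p = γ := by rw [hp, linPair_single]; field_simp
  have hpL' : linPair L' p = γ' := (hmem p).1 hpL
  have hγ' : (L' j : ℝ) * (γ / (L j : ℝ)) = γ' := by
    rw [← linPair_single L' j, ← hp]; exact hpL'
  set c : ℚ := L' j / L j with hc
  have hprop : ∀ i, L' i = c * L i := by
    intro i
    rcases eq_or_ne i j with rfl | hij
    · rw [hc]; field_simp
    · have hq : linPair L (p + (Pi.single j ((L i : ℝ)) + Pi.single i (-(L j : ℝ)))) = γ := by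
        rw [linPair_add, linPair_add, hpL, linPair_single, linPair_single]; ring
      have hq' := (hmem _).1 hq
      rw [linPair_add, linPair_add, hpL', linPair_single, linPair_single] at hq'
      have hR : (L' j : ℝ) * (L i : ℝ) = (L' i : ℝ) * (L j : ℝ) := by linarith
      have hQ : L' j * L i = L' i * L j := by exact_mod_cast hR
      rw [hc]
      field_simp
      linarith [hQ]
  have hcpos : 0 < c := by
    obtain ⟨i, hi⟩ := Function.ne_iff.1 hL0'
    have h1 : 0 < L' i := lt_of_le_of_ne (hL' i) (Ne.symm hi)
    have h2 := hprop i
    nlinarith [hL i]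
  refine ⟨c, hcpos, hprop, ?_⟩
  have hcR : (c : ℝ) = (L' j : ℝ) / (L j : ℝ) := by rw [hc]; push_cast; ring
  rw [hcR]
  field_simp at hγ' ⊢
  linarith [hγ']

lemma lattice_gap {r : ℕ} (L : Fin r → ℚ) (M : ℝ) :
    ∃ g > 0, ∀ n : Fin r → ℤ, ((∑ i, L i * n i : ℚ) : ℝ) < M →
      ((∑ i, L i * n i : ℚ) : ℝ) ≤ M - g := by
  set D : ℕ := ∏ i, (L i).den with hD
  have hD0 : 0 < D := Finset.prod_pos fun i _ => (L i).pos
  have hDR : (0:ℝ) < (D:ℝ) := by exact_mod_cast hD0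
  have hint : ∀ n : Fin r → ℤ, ∃ z : ℤ, (∑ i, L i * n i) * (D : ℚ) = (z : ℚ) := by
    intro n
    have hterm : ∀ i : Fin r, ∃ z : ℤ, (L i) * (D : ℚ) = (z : ℚ) := by
      intro i
      obtain ⟨k, hk⟩ := Finset.dvd_prod_of_mem (fun i => (L i).den) (Finset.mem_univ i)
      refine ⟨(L i).num * k, ?_⟩
      rw [← hD] at hk
      rw [hk]
      push_cast
      rw [← mul_assoc, Rat.mul_den_eq_num]
    choose z hz using hterm
    refine ⟨∑ i, z i * n i, ?_⟩
    rw [Finset.sum_mul]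
    push_cast
    refine Finset.sum_congr rfl fun i _ => ?_
    rw [mul_right_comm, hz i]
  set C : ℤ := ⌈(D:ℝ) * M⌉ with hC
  refine ⟨M - ((C : ℝ) - 1) / D, ?_, ?_⟩
  · have h1 := Int.ceil_lt_add_one ((D:ℝ) * M)
    have h2 : ((C : ℝ) - 1) / D < M := by
      rw [div_lt_iff₀ hDR, hC]
      nlinarith
    linarith
  · intro n hn
    obtain ⟨z, hz⟩ := hint n
    have hzR : ((∑ i, L i * n i : ℚ) : ℝ) * (D:ℝ) = (z : ℝ) := by exact_mod_cast hz
    have hzC : z < C := by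
      rw [hC]
      refine Int.lt_ceil.2 ?_
      nlinarith
    have h4 : (z : ℝ) ≤ (C : ℝ) - 1 := by exact_mod_cast Int.le_sub_one_of_lt hzC
    have h3 : ((∑ i, L i * n i : ℚ) : ℝ) ≤ ((C:ℝ) - 1) / D := by
      rw [le_div_iff₀ hDR]; linarith
    linarith

lemma linPair_int {r : ℕ} (L : Fin r → ℚ) (n : Fin r → ℤ) :
    linPair L (fun i => (n i : ℝ)) = ((∑ i, L i * n i : ℚ) : ℝ) := by
  simp [linPair]

lemma translate_wall {r : ℕ} (L : Fin r → ℚ) (γ : ℝ) (n : Fin r → ℤ) :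
    (fun α : Fin r → ℝ => α + fun i => ((n i : ℝ))) '' {x | linPair L x = γ}
      = {x | linPair L x = γ + linPair L (fun i => (n i : ℝ))} := by
  ext y
  constructor
  · rintro ⟨x, hx, rfl⟩
    simp only [Set.mem_setOf_eq] at hx ⊢
    rw [linPair_add, hx]
  · intro hy
    simp only [Set.mem_setOf_eq] at hy
    refine ⟨y - fun i => (n i : ℝ), ?_, by funext i; simp⟩
    simp only [Set.mem_setOf_eq]
    have := linPair_add L (y - fun i => (n i : ℝ)) (fun i => (n i : ℝ))
    rw [sub_add_cancel] at this
    linarith [hy, this]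

/-! ### Canonical chambers -/

/-- Walls of `W` that lie strictly below `z`. -/
def upSide {r : ℕ} (W : Set (Set (Fin r → ℝ))) (z : Fin r → ℝ) : Set (Set (Fin r → ℝ)) :=
  {H | H ∈ W ∧ ∀ (L : Fin r → ℚ) (γ : ℝ), (∀ i, 0 ≤ L i) → L ≠ 0 →
      H = {x | linPair L x = γ} → γ < linPair L z}

/-- Walls of `W` that lie weakly above `z`. -/
def downSide {r : ℕ} (W : Set (Set (Fin r → ℝ))) (z : Fin r → ℝ) : Set (Set (Fin r → ℝ)) :=
  {H | H ∈ W ∧ ∀ (L : Fin r → ℚ) (γ : ℝ), (∀ i, 0 ≤ L i) → L ≠ 0 →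
      H = {x | linPair L x = γ} → linPair L z ≤ γ}

/-- The canonical chamber of a point `z`. -/
def chamberOf {r : ℕ} (W : Set (Set (Fin r → ℝ))) (z : Fin r → ℝ) : Set (Fin r → ℝ) :=
  {α | (∀ Hy ∈ upSide W z, ∀ (L : Fin r → ℚ) (β : ℝ),
          (∀ i, 0 ≤ L i) → L ≠ 0 → Hy = {x | linPair L x = β} → β < linPair L α) ∧
       (∀ Hy ∈ downSide W z, ∀ (L : Fin r → ℚ) (β : ℝ),
          (∀ i, 0 ≤ L i) → L ≠ 0 → Hy = {x | linPair L x = β} → linPair L α ≤ β)}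

lemma mem_chamberOf_self {r : ℕ} (W : Set (Set (Fin r → ℝ))) (z : Fin r → ℝ) :
    z ∈ chamberOf W z :=
  ⟨fun _ hH => hH.2, fun _ hH => hH.2⟩

lemma isChamber_chamberOf {r : ℕ} {W : Set (Set (Fin r → ℝ))}
    (hWall : ∀ H ∈ W, IsWall H) (z : Fin r → ℝ) : IsChamber W (chamberOf W z) := by
  refine ⟨⟨z, mem_chamberOf_self W z⟩, upSide W z, downSide W z, ?_, ?_, rfl⟩
  · ext H
    constructor
    · rintro (h | h) <;> exact h.1
    · intro hH
      obtain ⟨L₁, γ₁, h1, h2, h3⟩ := hWall H hH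
      by_cases hside : γ₁ < linPair L₁ z
      · left
        refine ⟨hH, fun L' γ' h1' h2' h3' => ?_⟩
        obtain ⟨c, hc, hcL, hcγ⟩ := repr_prop h1 h2 h1' h2' (h3.symm.trans h3')
        have hcR : (0:ℝ) < (c:ℝ) := by exact_mod_cast hc
        rw [linPair_of_prop hcL, hcγ]
        exact (mul_lt_mul_iff_right₀ hcR).2 hside
      · right
        push_neg at hside
        refine ⟨hH, fun L' γ' h1' h2' h3' => ?_⟩
        obtain ⟨c, hc, hcL, hcγ⟩ := repr_prop h1 h2 h1' h2' (h3.symm.trans h3')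
        have hcR : (0:ℝ) < (c:ℝ) := by exact_mod_cast hc
        rw [linPair_of_prop hcL, hcγ]
        exact (mul_le_mul_iff_right₀ hcR).2 hside
  · ext H
    simp only [Set.mem_inter_iff, Set.mem_empty_iff_false, iff_false, not_and]
    rintro ⟨hH, hup⟩ ⟨-, hdn⟩
    obtain ⟨L₁, γ₁, h1, h2, h3⟩ := hWall H hH
    exact absurd (hdn L₁ γ₁ h1 h2 h3) (not_le.2 (hup L₁ γ₁ h1 h2 h3))

/-! ### Main theorem -/

/-- For a wall and chamber family `U` of subsets of `X` with set of walls `W`, if `α, β` are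
separated by exactly one wall `L⁻¹(γ)` of `W`, with `L(α) ≤ γ < L(β)`, then `U^β ⊆ U^α`. -/
theorem wall_chamber_family_single_wall {r : ℕ} (hr : 0 < r) {X : Type*}
    (W : Set (Set (Fin r → ℝ))) (hW : IsWallSet W)
    (U : (Fin r → ℝ) → Set X)
    (hmono : ∀ α β : Fin r → ℝ, α ≤ β → U β ⊆ U α)
    (hconst : ∀ σ : Set (Fin r → ℝ), IsChamber W σ → ∀ α ∈ σ, ∀ β ∈ σ, U α = U β)
    (α β : Fin r → ℝ) (Hy : Set (Fin r → ℝ)) (hHy : Hy ∈ W)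
    (L : Fin r → ℚ) (γ : ℝ)
    (hL : ∀ i, 0 ≤ L i) (hL0 : L ≠ 0) (hHdef : Hy = {x | linPair L x = γ})
    (hsep : linPair L α ≤ γ ∧ γ < linPair L β)
    (huniq : ∀ Hy' ∈ W, WallSeparates Hy' α β → Hy' = Hy) :
    U β ⊆ U α := by
  obtain ⟨hA, hB⟩ := hsep
  obtain ⟨hWall, W₀, hW₀W, hW₀fin, htr⟩ := hW
  choose L₀ γ₀ hpos₀ hne₀ hdef₀ using fun H (h : H ∈ W₀) => hWall H (hW₀W h)
  have hgap : ∀ H, ∀ h : H ∈ W₀, ∃ g > 0, ∀ n : Fin r → ℤ,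
      ((∑ i, L₀ H h i * n i : ℚ) : ℝ) <
        min (linPair (L₀ H h) α) (linPair (L₀ H h) β) - γ₀ H h →
      ((∑ i, L₀ H h i * n i : ℚ) : ℝ) ≤
        min (linPair (L₀ H h) α) (linPair (L₀ H h) β) - γ₀ H h - g :=
    fun H h => lattice_gap _ _
  choose g hg0 hg using hgap
  -- choose ε > 0 small enough relative to all base walls
  have hε : ∃ ε > 0, ∀ H, ∀ h : H ∈ W₀, ε * (∑ i, (L₀ H h i : ℝ)) < g H h := by
    classical
    set f : Set (Fin r → ℝ) → ℝ :=
      fun H => if h : H ∈ W₀ then g H h / ((∑ i, (L₀ H h i : ℝ)) + 1) else 1 with hf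
    have hfpos : ∀ H, 0 < f H := by
      intro H
      rw [hf]
      by_cases h : H ∈ W₀
      · simp only [dif_pos h]
        have hs : (0:ℝ) ≤ ∑ i, (L₀ H h i : ℝ) :=
          Finset.sum_nonneg fun i _ => by exact_mod_cast hpos₀ H h i
        exact div_pos (hg0 H h) (by linarith)
      · simp [dif_neg h]
    rcases hW₀fin.toFinset.eq_empty_or_nonempty with he | hne
    · refine ⟨1, one_pos, fun H h => ?_⟩
      exact absurd (hW₀fin.mem_toFinset.2 h) (by simp [he])
    · obtain ⟨H₁, hH₁, hmin⟩ := hW₀fin.toFinset.exists_min_image f hne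
      refine ⟨f H₁, hfpos H₁, fun H h => ?_⟩
      have h1 : f H₁ ≤ f H := hmin H (hW₀fin.mem_toFinset.2 h)
      have h2 : f H = g H h / ((∑ i, (L₀ H h i : ℝ)) + 1) := by rw [hf]; simp [dif_pos h]
      have hs : (0:ℝ) ≤ ∑ i, (L₀ H h i : ℝ) :=
        Finset.sum_nonneg fun i _ => by exact_mod_cast hpos₀ H h i
      have h3 : f H * (∑ i, (L₀ H h i : ℝ)) < g H h := by
        rw [h2, div_mul_eq_mul_div, div_lt_iff₀ (by linarith)]
        nlinarith [hg0 H h]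
      have h4 := mul_le_mul_of_nonneg_right h1 hs
      linarith
  obtain ⟨ε, hε0, hεg⟩ := hε
  set SL : ℝ := ∑ i, (L i : ℝ) with hSL
  have hSL0 : 0 < SL := sum_pos_of_ne hL hL0
  have hBA : 0 < linPair L β - linPair L α := by linarith
  set t₀ : ℝ := (γ - linPair L α) / (linPair L β - linPair L α) with ht₀
  have ht₀γ : linPair L α + t₀ * (linPair L β - linPair L α) = γ := by
    rw [ht₀]; field_simp; ring
  have ht₀0 : 0 ≤ t₀ := div_nonneg (by linarith) hBA.le
  have ht₀1 : t₀ < 1 := (div_lt_one hBA).2 (by linarith)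
  set t₁ : ℝ := min 1 (t₀ + ε * SL / (linPair L β - linPair L α)) with ht₁
  have ht₁0 : t₀ < t₁ := by
    rw [ht₁]
    refine lt_min ht₀1 ?_
    have : 0 < ε * SL / (linPair L β - linPair L α) := by positivity
    linarith
  have ht₁1 : t₁ ≤ 1 := min_le_left _ _
  have ht₁low : 0 ≤ t₁ := le_trans ht₀0 ht₁0.le
  have hkey : (t₁ - t₀) * (linPair L β - linPair L α) ≤ ε * SL := by
    have h1 : t₁ ≤ t₀ + ε * SL / (linPair L β - linPair L α) := min_le_right _ _
    have h2 : (t₁ - t₀) * (linPair L β - linPair L α) ≤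
        (ε * SL / (linPair L β - linPair L α)) * (linPair L β - linPair L α) := by
      apply mul_le_mul_of_nonneg_right (by linarith) hBA.le
    rwa [div_mul_cancel₀ _ hBA.ne'] at h2
  set p : Fin r → ℝ := fun i => α i + t₁ * (β i - α i) with hp
  set q : Fin r → ℝ := fun i => p i - ε with hq
  have hqp : q ≤ p := by
    intro i
    rw [hq]
    simp only
    linarith
  -- no wall other than Hy separates α and β
  have hnosep : ∀ H ∈ W, H ≠ Hy → ∀ (L' : Fin r → ℚ) (γ' : ℝ), (∀ i, 0 ≤ L' i) → L' ≠ 0 →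
      H = {x | linPair L' x = γ'} →
      (γ' < linPair L' α ↔ γ' < linPair L' β) := by
    intro H hH hne L' γ' h1 h2 h3
    constructor
    · intro h
      by_contra hc
      push_neg at hc
      exact hne (huniq H hH ⟨L', γ', h1, h2, h3, Or.inr ⟨hc, h⟩⟩)
    · intro h
      by_contra hc
      push_neg at hc
      exact hne (huniq H hH ⟨L', γ', h1, h2, h3, Or.inl ⟨hc, h⟩⟩)
  -- any representation of Hy is proportional to (L, γ)
  have hHyrepr : ∀ (L' : Fin r → ℚ) (γ' : ℝ), (∀ i, 0 ≤ L' i) → L' ≠ 0 →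
      Hy = {x | linPair L' x = γ'} →
      ∃ c : ℚ, 0 < c ∧ (∀ i, L' i = c * L i) ∧ γ' = (c : ℝ) * γ :=
    fun L' γ' h1 h2 h3 => repr_prop hL hL0 h1 h2 (hHdef.symm.trans h3)
  -- the key quantitative estimate coming from discreteness
  have hup : ∀ H ∈ W, ∀ (L' : Fin r → ℚ) (γ' : ℝ), (∀ i, 0 ≤ L' i) → L' ≠ 0 →
      H = {x | linPair L' x = γ'} →
      γ' < min (linPair L' α) (linPair L' β) →
      γ' + ε * ∑ i, (L' i : ℝ) < min (linPair L' α) (linPair L' β) := by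
    intro H hH L' γ' h1 h2 h3 hlt
    obtain ⟨n, H₀, hH₀, himg⟩ := htr H hH
    have hdef' : H = {x | linPair (L₀ H₀ hH₀) x =
        γ₀ H₀ hH₀ + linPair (L₀ H₀ hH₀) (fun i => (n i : ℝ))} := by
      refine himg.trans (Eq.trans ?_ (translate_wall (L₀ H₀ hH₀) (γ₀ H₀ hH₀) n))
      exact congrArg (fun s => (fun α : Fin r → ℝ => α + fun i => ((n i : ℝ))) '' s)
        (hdef₀ H₀ hH₀)
    obtain ⟨c, hc, hcL, hcγ⟩ :=
      repr_prop (hpos₀ H₀ hH₀) (hne₀ H₀ hH₀) h1 h2 (hdef'.symm.trans h3)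
    have hcR : (0:ℝ) < (c:ℝ) := by exact_mod_cast hc
    have hminL' : min (linPair L' α) (linPair L' β) =
        (c:ℝ) * min (linPair (L₀ H₀ hH₀) α) (linPair (L₀ H₀ hH₀) β) := by
      rw [linPair_of_prop hcL]
      rw [linPair_of_prop hcL]
      exact (mul_min_of_nonneg _ _ hcR.le).symm
    have hsum := sum_of_prop hcL
    rw [hcγ, hminL'] at hlt
    rw [hcγ, hminL', hsum]
    have hlt' : γ₀ H₀ hH₀ + linPair (L₀ H₀ hH₀) (fun i => (n i : ℝ)) <
        min (linPair (L₀ H₀ hH₀) α) (linPair (L₀ H₀ hH₀) β) :=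
      lt_of_mul_lt_mul_left (by linarith) hcR.le
    have hg' := hg H₀ hH₀ n (by rw [← linPair_int]; linarith)
    rw [← linPair_int] at hg'
    have hεg' := hεg H₀ hH₀
    have hfin : γ₀ H₀ hH₀ + linPair (L₀ H₀ hH₀) (fun i => (n i : ℝ))
        + ε * ∑ i, (L₀ H₀ hH₀ i : ℝ) <
        min (linPair (L₀ H₀ hH₀) α) (linPair (L₀ H₀ hH₀) β) := by linarith
    have hprod := mul_pos hcR (sub_pos.2 hfin)
    nlinarith [hprod]
  -- membership of p in the chamber of β
  have hpβ : p ∈ chamberOf W β := by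
    constructor
    · rintro H ⟨hHW, hup'⟩ L' γ' h1 h2 h3
      have hβ' : γ' < linPair L' β := hup' L' γ' h1 h2 h3
      rcases eq_or_ne H Hy with rfl | hne
      · obtain ⟨c, hc, hcL, hcγ⟩ := hHyrepr L' γ' h1 h2 h3
        have hcR : (0:ℝ) < (c:ℝ) := by exact_mod_cast hc
        rw [linPair_of_prop hcL, hcγ]
        refine (mul_lt_mul_iff_right₀ hcR).2 ?_
        rw [hp, linPair_seg]
        have hprod := mul_pos (sub_pos.2 ht₁0) hBA
        linarith [ht₀γ]
      · have hα' : γ' < linPair L' α := (hnosep H hHW hne L' γ' h1 h2 h3).2 hβ'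
        rw [hp, linPair_seg]
        exact convex_gt hα' hβ' ht₁low ht₁1
    · rintro H ⟨hHW, hdn'⟩ L' γ' h1 h2 h3
      have hβ' : linPair L' β ≤ γ' := hdn' L' γ' h1 h2 h3
      have hne : H ≠ Hy := by
        rintro rfl
        obtain ⟨c, hc, hcL, hcγ⟩ := hHyrepr L' γ' h1 h2 h3
        have hcR : (0:ℝ) < (c:ℝ) := by exact_mod_cast hc
        rw [linPair_of_prop hcL, hcγ] at hβ'
        have := le_of_mul_le_mul_left hβ' hcR
        linarith
      have hα' : linPair L' α ≤ γ' := by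
        by_contra hc
        push_neg at hc
        exact absurd ((hnosep H hHW hne L' γ' h1 h2 h3).1 hc) (not_lt.2 hβ')
      rw [hp, linPair_seg]
      exact convex_le hα' hβ' ht₁low ht₁1
  -- membership of q in the chamber of α
  have hqα : q ∈ chamberOf W α := by
    constructor
    · rintro H ⟨hHW, hup'⟩ L' γ' h1 h2 h3
      have hα' : γ' < linPair L' α := hup' L' γ' h1 h2 h3
      have hne : H ≠ Hy := by
        rintro rfl
        obtain ⟨c, hc, hcL, hcγ⟩ := hHyrepr L' γ' h1 h2 h3
        have hcR : (0:ℝ) < (c:ℝ) := by exact_mod_cast hc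
        rw [linPair_of_prop hcL, hcγ] at hα'
        have := lt_of_mul_lt_mul_left hα' hcR.le
        linarith
      have hβ' : γ' < linPair L' β := (hnosep H hHW hne L' γ' h1 h2 h3).1 hα'
      have hmin : γ' < min (linPair L' α) (linPair L' β) := lt_min hα' hβ'
      have hkey2 := hup H hHW L' γ' h1 h2 h3 hmin
      have hq' : linPair L' q = linPair L' p - ε * ∑ i, (L' i : ℝ) := by
        rw [hq, linPair_sub_const]
      have hpmin : min (linPair L' α) (linPair L' β) ≤ linPair L' p := by
        rw [hp, linPair_seg]
        exact convex_min_le ht₁low ht₁1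
      rw [hq']
      linarith
    · rintro H ⟨hHW, hdn'⟩ L' γ' h1 h2 h3
      have hα' : linPair L' α ≤ γ' := hdn' L' γ' h1 h2 h3
      have hq' : linPair L' q = linPair L' p - ε * ∑ i, (L' i : ℝ) := by
        rw [hq, linPair_sub_const]
      rcases eq_or_ne H Hy with rfl | hne
      · obtain ⟨c, hc, hcL, hcγ⟩ := hHyrepr L' γ' h1 h2 h3
        have hcR : (0:ℝ) < (c:ℝ) := by exact_mod_cast hc
        have hpL : linPair L p = linPair L α + t₁ * (linPair L β - linPair L α) := by
          rw [hp, linPair_seg]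
        have h5 : linPair L p - ε * SL ≤ γ := by
          rw [hpL]
          nlinarith [hkey, ht₀γ]
        rw [hq', linPair_of_prop hcL, sum_of_prop hcL, hcγ, ← hSL]
        have h6 := mul_le_mul_of_nonneg_left h5 hcR.le
        nlinarith [h6]
      · have hβ' : linPair L' β ≤ γ' := by
          by_contra hc
          push_neg at hc
          exact absurd ((hnosep H hHW hne L' γ' h1 h2 h3).2 hc) (not_lt.2 hα')
        have hpb : linPair L' p ≤ γ' := by
          rw [hp, linPair_seg]
          exact convex_le hα' hβ' ht₁low ht₁1
        have hs : (0:ℝ) ≤ ∑ i, (L' i : ℝ) :=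
          Finset.sum_nonneg fun i _ => by exact_mod_cast h1 i
        have := mul_nonneg hε0.le hs
        rw [hq']
        linarith
  -- conclude
  have h1 : U β = U p :=
    hconst _ (isChamber_chamberOf hWall β) β (mem_chamberOf_self W β) p hpβ
  have h2 : U q = U α :=
    hconst _ (isChamber_chamberOf hWall α) q hqα α (mem_chamberOf_self W α)
  rw [h1, ← h2]
  exact hmono q p hqp
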